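/- For each word w over {e_0,e_1} of length l and depth d (number of e_1's) whose block decomposition of e_0 w e_1 gives block lengths (d_1,…,d_n), the congruence d ≡ ⌈l/2⌉ + d_1 + d_3 + d_5 + ⋯ (mod 2) holds, where the sum is over block lengths with odd index. -/
import Mathlib

/-- A word over the two-letter alphabet `{e_0, e_1}` (modelled as `Bool`, with
`e_0 = false`, `e_1 = true`) is *alternating* if it is non-empty and has no two
equal adjacent letters. -/
def Alternating (l : List Bool) : Prop := l ≠ [] ∧ l.Chain' (· ≠ ·)

/-- `L` is the block decomposition of `w`: a factorization of `w` into alternating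
words such that the last letter of each factor equals the first letter of the next. -/
def BlockDecomp (w : List Bool) (L : List (List Bool)) : Prop :=
  (∀ b ∈ L, Alternating b) ∧ L.flatten = w ∧
    L.Chain' (fun a b => a.getLast? = b.head?)

mutual
def Sodd : List (List Bool) → ℕ
  | [] => 0
  | b :: L => b.length + Seven L
def Seven : List (List Bool) → ℕ
  | [] => 0
  | _ :: L => Sodd L
end

lemma sum_eq (L : List (List Bool)) :
    (∑ i ∈ Finset.range L.length, (if i % 2 = 0 then (L.getD i []).length else 0)) = Sodd L ∧
    (∑ i ∈ Finset.range L.length, (if i % 2 = 1 then (L.getD i []).length else 0)) = Seven L := by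
  induction L with
  | nil => simp [Sodd, Seven]
  | cons b L ih =>
    constructor
    · rw [List.length_cons, Finset.sum_range_succ']
      have hcg : ∀ i ∈ Finset.range L.length,
          (if (i+1) % 2 = 0 then ((b :: L).getD (i+1) []).length else 0)
          = (if i % 2 = 1 then (L.getD i []).length else 0) := by
        intro i _
        rw [List.getD_cons_succ]
        by_cases h : i % 2 = 1
        · rw [if_pos h, if_pos (by omega)]
        · rw [if_neg h, if_neg (by omega)]
      rw [Finset.sum_congr rfl hcg, ih.2, List.getD_cons_zero, if_pos rfl, Sodd]
      omega
    · rw [List.length_cons, Finset.sum_range_succ']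
      have hcg : ∀ i ∈ Finset.range L.length,
          (if (i+1) % 2 = 1 then ((b :: L).getD (i+1) []).length else 0)
          = (if i % 2 = 0 then (L.getD i []).length else 0) := by
        intro i _
        rw [List.getD_cons_succ]
        by_cases h : i % 2 = 0
        · rw [if_pos h, if_pos (by omega)]
        · rw [if_neg h, if_neg (by omega)]
      rw [Finset.sum_congr rfl hcg, ih.1, if_neg (by omega), Seven]
      omega

lemma sodd_add_seven : ∀ L : List (List Bool), Sodd L + Seven L = L.flatten.length := by
  intro L
  induction L with
  | nil => rfl
  | cons b L ih =>
    rw [Sodd, Seven, List.flatten_cons, List.length_append]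
    omega

lemma alt_count : ∀ (b : List Bool), b.Chain' (· ≠ ·) → ∀ s e : Bool,
    b.head? = some s → b.getLast? = some e →
    2 * b.count true + 1 = b.length + s.toNat + e.toNat := by
  intro b
  induction b with
  | nil => intro _ s e h; simp at h
  | cons x t ih =>
    intro hch s e hs he
    cases t with
    | nil =>
      simp only [List.head?_cons, Option.some.injEq] at hs
      simp only [List.getLast?_singleton, Option.some.injEq] at he
      subst hs; subst he
      cases x <;> simp
    | cons y t' =>
      have hch' := List.isChain_cons_cons.mp hch
      have hxy : y = !x := by
        cases x <;> cases y <;> simp_all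
      have hlast : (y :: t').getLast? = some e := by
        rw [← he, List.getLast?_cons_cons]
      have hIH := ih hch'.2 y e rfl hlast
      simp only [List.head?_cons, Option.some.injEq] at hs
      subst hs
      subst hxy
      simp only [List.count_cons, List.length_cons] at hIH ⊢
      cases x <;> cases e <;> simp at hIH ⊢ <;> omega

lemma main_lemma : ∀ (L : List (List Bool)), L ≠ [] →
    (∀ b ∈ L, Alternating b) →
    L.Chain' (fun a b => a.getLast? = b.head?) →
    ∀ s : Bool, L.flatten.head? = some s → L.flatten.getLast? = some true →
    L.flatten.count true % 2
      = ((L.flatten.length - 1)/2 + Sodd L + 1 + s.toNat * L.flatten.length) % 2 := by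
  intro L
  induction L with
  | nil => intro h; exact absurd rfl h
  | cons b L ih =>
    intro _ halt hch s hs hlast
    have hb : Alternating b := halt b (by simp)
    have hblen : 1 ≤ b.length := List.length_pos_iff.mpr hb.1
    cases L with
    | nil =>
      simp only [List.flatten_cons, List.flatten_nil, List.append_nil] at hs hlast ⊢
      have h1 := alt_count b hb.2 s true hs hlast
      rw [Sodd, Seven]
      cases s <;> simp only [Bool.toNat_false, Bool.toNat_true] at h1 ⊢ <;> omega
    | cons c L' =>
      have hc : Alternating c := halt c (by simp)
      have hv'ne : (c :: L').flatten ≠ [] := by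
        rw [List.flatten_cons]
        cases c with
        | nil => exact absurd rfl hc.1
        | cons x t => simp
      have hv'len : 1 ≤ (c :: L').flatten.length := List.length_pos_iff.mpr hv'ne
      have hv'head : (c :: L').flatten.head? = c.head? := by
        rw [List.flatten_cons]
        cases c with
        | nil => exact absurd rfl hc.1
        | cons x t => rfl
      obtain ⟨e, he⟩ : ∃ e, c.head? = some e := by
        cases c with
        | nil => exact absurd rfl hc.1
        | cons x t => exact ⟨x, rfl⟩
      have hbe : b.getLast? = some e := by
        have h := (List.isChain_cons_cons.mp hch).1
        rw [h, he]
      have hbs : b.head? = some s := by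
        rw [List.flatten_cons] at hs
        cases b with
        | nil => exact absurd rfl hb.1
        | cons x t => simpa using hs
      have hlast' : (c :: L').flatten.getLast? = some true := by
        rw [List.flatten_cons, List.getLast?_append] at hlast
        cases hv : (c :: L').flatten.getLast? with
        | none =>
          exact absurd (List.getLast?_eq_none_iff.mp hv) hv'ne
        | some a =>
          rw [hv] at hlast
          simpa using hlast
      have h1 := alt_count b hb.2 s e hbs hbe
      have h2 := ih (by simp) (fun x hx => halt x (List.mem_cons_of_mem _ hx))
        (List.isChain_cons_cons.mp hch).2 e (hv'head.trans he) hlast'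
      have hlen : Sodd (c :: L') + Seven (c :: L') = (c :: L').flatten.length :=
        sodd_add_seven _
      rw [List.flatten_cons, List.count_append, List.length_append, Sodd]
      rcases Nat.even_or_odd ((c :: L').flatten.length) with ⟨t,ht⟩|⟨t,ht⟩ <;>
        cases s <;> cases e <;>
        simp only [Bool.toNat_false, Bool.toNat_true] at h1 h2 ⊢ <;> omega

/-- For a word `w` of length `l` and depth `d` (number of `e_1`'s), if the block
decomposition of `e_0 w e_1` has block lengths `(d_1, …, d_n)`, then
`d ≡ ⌈l/2⌉ + d_1 + d_3 + d_5 + ⋯ (mod 2)`, summing block lengths of odd index. -/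
theorem depth_block_parity (w : List Bool) (L : List (List Bool))
    (hL : BlockDecomp (false :: (w ++ [true])) L) :
    w.count true ≡
      (w.length + 1) / 2 +
        ∑ i ∈ Finset.range L.length, (if i % 2 = 0 then (L.getD i []).length else 0)
      [MOD 2] := by
  obtain ⟨halt, hfl, hch⟩ := hL
  have hne : L ≠ [] := by
    intro h; rw [h] at hfl; simp at hfl
  have hhead : L.flatten.head? = some false := by rw [hfl]; rfl
  have hlast : L.flatten.getLast? = some true := by
    rw [hfl]
    show ((false :: w) ++ [true]).getLast? = some true
    rw [List.getLast?_concat]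
  have hmain := main_lemma L hne halt hch false hhead hlast
  rw [hfl] at hmain
  simp [List.count_cons, List.count_append, List.length_append] at hmain
  rw [(sum_eq L).1]
  show _ % 2 = _ % 2
  rcases Nat.even_or_odd w.length with ⟨t,ht⟩|⟨t,ht⟩ <;> omega
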